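/- Let G be a countable group acting on a countable set S, and suppose there exists a G-invariant finitely additive probability measure (mean) on S, i.e., a state on ℓ∞(S) invariant under the G-action. Then for every finite F ⊆ G and ε > 0 there exists a nonzero ξ ∈ ℓ²(S) with ‖g·ξ − ξ‖₂ ≤ ε‖ξ‖₂ for all g ∈ F. Conversely, if such almost-invariant ℓ²-vectors exist for every finite F and ε > 0, then there is a G-invariant mean on S. -/

import Mathlib

open Pointwise Filter

section FA
variable {S : Type*} {m : Set S → ℝ}

lemma m_empty (hadd : ∀ A B : Set S, Disjoint A B → m (A ∪ B) = m A + m B) : m ∅ = 0 := by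
  have := hadd ∅ ∅ (disjoint_bot_left)
  simp at this
  linarith

lemma m_biUnion (hadd : ∀ A B : Set S, Disjoint A B → m (A ∪ B) = m A + m B)
    {ι : Type*} (t : Finset ι) (D : ι → Set S)
    (hdisj : ∀ i ∈ t, ∀ j ∈ t, i ≠ j → Disjoint (D i) (D j)) :
    m (⋃ i ∈ t, D i) = ∑ i ∈ t, m (D i) := by
  classical
  induction t using Finset.induction with
  | empty => simpa using m_empty hadd
  | @insert a s hx ih =>
    rw [Finset.set_biUnion_insert, Finset.sum_insert hx,
      hadd _ _ ?_, ih ?_]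
    · intro i hi j hj hij
      exact hdisj i (Finset.mem_insert_of_mem hi) j (Finset.mem_insert_of_mem hj) hij
    · refine Set.disjoint_iUnion₂_right.mpr fun i hi => ?_
      exact hdisj a (Finset.mem_insert_self a s) i (Finset.mem_insert_of_mem hi)
        (fun h => hx (h ▸ hi))

lemma m_nonneg_comb (h0 : ∀ A : Set S, 0 ≤ m A)
    (hadd : ∀ A B : Set S, Disjoint A B → m (A ∪ B) = m A + m B)
    {ι : Type*} (u : Finset ι) (D : ι → Set S) (a : ι → ℝ)
    (h : ∀ s : S, 0 ≤ ∑ i ∈ u, a i * (D i).indicator (fun _ => (1:ℝ)) s) :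
    0 ≤ ∑ i ∈ u, a i * m (D i) := by
  classical
  set atom : Finset ι → Set S := fun T => {s | ∀ i ∈ u, (s ∈ D i ↔ i ∈ T)} with hatom
  have hdisj : ∀ T ∈ u.powerset, ∀ T' ∈ u.powerset, T ≠ T' → Disjoint (atom T) (atom T') := by
    intro T hT T' hT' hne
    rw [Set.disjoint_left]
    intro s hs hs'
    apply hne
    ext i
    constructor
    · intro hi
      have hiu : i ∈ u := Finset.mem_powerset.mp hT hi
      exact (hs' i hiu).mp ((hs i hiu).mpr hi)
    · intro hi
      have hiu : i ∈ u := Finset.mem_powerset.mp hT' hi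
      exact (hs i hiu).mp ((hs' i hiu).mpr hi)
  have hpart : ∀ i ∈ u, D i = ⋃ T ∈ u.powerset.filter (fun T => i ∈ T), atom T := by
    intro i hi
    ext s
    simp only [Set.mem_iUnion, Finset.mem_filter, Finset.mem_powerset]
    constructor
    · intro hs
      refine ⟨u.filter (fun j => s ∈ D j), ⟨⟨Finset.filter_subset _ _, ?_⟩, ?_⟩⟩
      · exact Finset.mem_filter.mpr ⟨hi, hs⟩
      · intro j hj
        simp [Finset.mem_filter, hj]
    · rintro ⟨T, ⟨⟨hTu, hiT⟩, hsT⟩⟩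
      exact (hsT i hi).mpr hiT
  have hmD : ∀ i ∈ u, m (D i) = ∑ T ∈ u.powerset, (if i ∈ T then m (atom T) else 0) := by
    intro i hi
    rw [hpart i hi, m_biUnion hadd _ _ (fun T hT T' hT' h =>
      hdisj T (Finset.mem_filter.mp hT).1 T' (Finset.mem_filter.mp hT').1 h),
      Finset.sum_filter]
  calc (0:ℝ) ≤ ∑ T ∈ u.powerset, m (atom T) * ∑ i ∈ T, a i := by
        refine Finset.sum_nonneg fun T hT => ?_
        rcases Set.eq_empty_or_nonempty (atom T) with he | ⟨s, hs⟩
        · rw [he, m_empty hadd, zero_mul]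
        · refine mul_nonneg (h0 _) ?_
          have := h s
          have heq : ∑ i ∈ u, a i * (D i).indicator (fun _ => (1:ℝ)) s = ∑ i ∈ T, a i := by
            rw [← Finset.sum_filter_add_sum_filter_not u (fun i => i ∈ T)]
            have h1 : ∑ i ∈ u.filter (fun i => i ∈ T), a i * (D i).indicator (fun _ => (1:ℝ)) s
                = ∑ i ∈ u.filter (fun i => i ∈ T), a i := by
              refine Finset.sum_congr rfl fun i hi => ?_
              rcases Finset.mem_filter.mp hi with ⟨hiu, hiT⟩
              rw [Set.indicator_of_mem ((hs i hiu).mpr hiT)]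
              ring
            have h2 : ∑ i ∈ u.filter (fun i => ¬ i ∈ T), a i * (D i).indicator (fun _ => (1:ℝ)) s
                = 0 := by
              refine Finset.sum_eq_zero fun i hi => ?_
              rcases Finset.mem_filter.mp hi with ⟨hiu, hiT⟩
              rw [Set.indicator_of_notMem (fun hmem => hiT ((hs i hiu).mp hmem))]
              ring
            rw [h1, h2, add_zero]
            congr 1
            rw [Finset.filter_mem_eq_inter, Finset.inter_eq_right.mpr (Finset.mem_powerset.mp hT)]
          rw [heq] at this
          exact this
    _ = ∑ i ∈ u, a i * m (D i) := by
        have l1 : ∀ T ∈ u.powerset, m (atom T) * ∑ i ∈ T, a i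
            = ∑ i ∈ u, (if i ∈ T then a i * m (atom T) else 0) := by
          intro T hT
          rw [Finset.mul_sum, ← Finset.sum_filter,
            Finset.filter_mem_eq_inter, Finset.inter_eq_right.mpr (Finset.mem_powerset.mp hT)]
          exact Finset.sum_congr rfl fun i _ => mul_comm _ _
        rw [Finset.sum_congr rfl l1, Finset.sum_comm]
        refine Finset.sum_congr rfl fun i hi => ?_
        rw [hmD i hi, Finset.mul_sum]
        refine Finset.sum_congr rfl fun T _ => ?_
        split_ifs with hiT <;> ring
end FA


lemma summable_abs_mul {S : Type*} {a b : S → ℝ}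
    (ha : Summable (fun s => a s ^ 2)) (hb : Summable (fun s => b s ^ 2)) :
    Summable (fun s => |a s * b s|) := by
  refine Summable.of_nonneg_of_le (fun s => abs_nonneg _)
    (fun s => ?_) ((ha.add hb).div_const 2)
  rw [abs_mul]
  nlinarith [sq_nonneg (|a s| - |b s|), sq_abs (a s), sq_abs (b s), abs_nonneg (a s), abs_nonneg (b s)]

lemma tsum_abs_mul_le {S : Type*} {a b : S → ℝ}
    (ha : Summable (fun s => a s ^ 2)) (hb : Summable (fun s => b s ^ 2)) :
    ∑' s, |a s * b s| ≤ Real.sqrt (∑' s, a s ^ 2) * Real.sqrt (∑' s, b s ^ 2) := by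
  refine Summable.tsum_le_of_sum_le (summable_abs_mul ha hb) fun t => ?_
  have h1 : (∑ s ∈ t, |a s * b s|) ^ 2 ≤ (∑ s ∈ t, a s ^ 2) * (∑ s ∈ t, b s ^ 2) := by
    have := Finset.sum_mul_sq_le_sq_mul_sq t (fun s => |a s|) (fun s => |b s|)
    simpa [sq_abs, abs_mul] using this
  have h2 : (∑ s ∈ t, a s ^ 2) ≤ ∑' s, a s ^ 2 :=
    Summable.sum_le_tsum t (fun s _ => sq_nonneg _) ha
  have h3 : (∑ s ∈ t, b s ^ 2) ≤ ∑' s, b s ^ 2 :=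
    Summable.sum_le_tsum t (fun s _ => sq_nonneg _) hb
  have hnn : (0:ℝ) ≤ ∑ s ∈ t, |a s * b s| := Finset.sum_nonneg fun s _ => abs_nonneg _
  have ha0 : (0:ℝ) ≤ ∑ s ∈ t, a s ^ 2 := Finset.sum_nonneg fun s _ => sq_nonneg _
  have hb0 : (0:ℝ) ≤ ∑ s ∈ t, b s ^ 2 := Finset.sum_nonneg fun s _ => sq_nonneg _
  calc (∑ s ∈ t, |a s * b s|) = Real.sqrt ((∑ s ∈ t, |a s * b s|) ^ 2) := by
        rw [Real.sqrt_sq hnn]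
    _ ≤ Real.sqrt ((∑' s, a s ^ 2) * (∑' s, b s ^ 2)) := by
        refine Real.sqrt_le_sqrt ?_
        calc (∑ s ∈ t, |a s * b s|) ^ 2 ≤ (∑ s ∈ t, a s ^ 2) * (∑ s ∈ t, b s ^ 2) := h1
          _ ≤ (∑' s, a s ^ 2) * (∑' s, b s ^ 2) := by
              exact mul_le_mul h2 h3 hb0 (le_trans ha0 h2)
    _ = Real.sqrt (∑' s, a s ^ 2) * Real.sqrt (∑' s, b s ^ 2) := Real.sqrt_mul (le_trans ha0 h2) _


lemma count_indicator {K : ℤ} {x : ℝ} (h1 : -K ≤ ⌊x⌋) (h2 : ⌊x⌋ ≤ K) :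
    ∑ k ∈ Finset.Icc (1 - K) K, (if (k:ℝ) ≤ x then (1:ℝ) else 0) = (⌊x⌋ : ℝ) + K := by
  classical
  rw [Finset.sum_boole]
  have hfil : (Finset.Icc (1 - K) K).filter (fun k : ℤ => (k:ℝ) ≤ x) = Finset.Icc (1 - K) ⌊x⌋ := by
    ext k
    simp only [Finset.mem_filter, Finset.mem_Icc]
    constructor
    · rintro ⟨⟨hk1, hk2⟩, hk3⟩
      exact ⟨hk1, Int.le_floor.mpr hk3⟩
    · rintro ⟨hk1, hk2⟩
      exact ⟨⟨hk1, le_trans hk2 h2⟩, Int.le_floor.mp hk2⟩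
  rw [hfil, Int.card_Icc]
  have h3 : (0:ℤ) ≤ ⌊x⌋ + 1 - (1 - K) := by omega
  have : (⌊x⌋ + 1 - (1 - K)).toNat = (⌊x⌋ + K).toNat := by omega
  rw [this]
  have h4 : (0:ℤ) ≤ ⌊x⌋ + K := by omega
  exact_mod_cast congrArg (Int.cast : ℤ → ℝ) (Int.toNat_of_nonneg h4)

lemma sqrt_sub_sq_le_abs {a b : ℝ} (ha : 0 ≤ a) (hb : 0 ≤ b) :
    (Real.sqrt a - Real.sqrt b) ^ 2 ≤ |a - b| := by
  rcases le_total b a with hba | hab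
  · rw [abs_of_nonneg (by linarith)]
    nlinarith [Real.sq_sqrt ha, Real.sq_sqrt hb, Real.sqrt_le_sqrt hba, Real.sqrt_nonneg b,
      Real.sqrt_nonneg a]
  · rw [abs_of_nonpos (by linarith)]
    nlinarith [Real.sq_sqrt ha, Real.sq_sqrt hb, Real.sqrt_le_sqrt hab, Real.sqrt_nonneg b,
      Real.sqrt_nonneg a]

section Fwd
variable {G : Type*} [Group G] {S : Type*} [MulAction G S]

set_option maxHeartbeats 2000000 in
lemma vectors_of_mean (m : Set S → ℝ) (hm1 : m Set.univ = 1) (h0 : ∀ A, 0 ≤ m A)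
    (hadd : ∀ A B, Disjoint A B → m (A ∪ B) = m A + m B)
    (hinv : ∀ (g : G) (A : Set S), m (g • A) = m A)
    (F : Finset G) (ε : ℝ) (hε : 0 < ε) :
    ∃ ξ : S → ℝ, Summable (fun s => ξ s ^ 2) ∧ (∑' s, ξ s ^ 2) ≠ 0 ∧
      ∀ g ∈ F, ∑' s, (ξ (g⁻¹ • s) - ξ s) ^ 2 ≤ ε ^ 2 * ∑' s, ξ s ^ 2 := by
  classical
  have hSne : Nonempty S := by
    by_contra hS
    rw [not_nonempty_iff] at hS
    rw [Set.univ_eq_empty_iff.mpr hS, m_empty hadd] at hm1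
    norm_num at hm1
  set D : (S →₀ ℝ) → (↥F × S) → ℝ := fun f p => f ((p.1 : G)⁻¹ • p.2) - f p.2 with hD
  set Tc : (S →₀ ℝ) → Finset (↥F × S) := fun f => (Finset.univ : Finset ↥F) ×ˢ
      (f.support ∪ f.support.biUnion (fun t => Finset.univ.image (fun g : ↥F => (g:G) • t)))
    with hTc
  have hDsupp : ∀ f : S →₀ ℝ, ∀ p : ↥F × S, p ∉ Tc f → D f p = 0 := by
    intro f p hp
    by_contra hne
    apply hp
    rcases p with ⟨g, s⟩
    rw [hTc, Finset.mem_product]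
    refine ⟨Finset.mem_univ _, Finset.mem_union.mpr ?_⟩
    by_cases hfs : f s = 0
    · right
      have hfg : f ((g:G)⁻¹ • s) ≠ 0 := by
        intro hz
        exact hne (by simp [hD, hz, hfs])
      refine Finset.mem_biUnion.mpr ⟨(g:G)⁻¹ • s, Finsupp.mem_support_iff.mpr hfg, ?_⟩
      exact Finset.mem_image.mpr ⟨g, Finset.mem_univ _, by simp⟩
    · exact Or.inl (Finsupp.mem_support_iff.mpr hfs)
  have hDsum : ∀ f : S →₀ ℝ, Summable (fun p => |D f p|) := by
    intro f
    exact summable_of_ne_finset_zero (s := Tc f) (fun p hp => by rw [hDsupp f p hp, abs_zero])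
  -- the lp space
  have hmem : ∀ f : S →₀ ℝ, Memℓp (D f) (1 : ENNReal) := by
    intro f
    apply memℓp_gen
    simpa using hDsum f
  set Φ : (S →₀ ℝ) → lp (fun _ : ↥F × S => ℝ) 1 := fun f => ⟨D f, hmem f⟩ with hΦ
  have hΦcoe : ∀ f : S →₀ ℝ, ⇑(Φ f) = D f := fun f => rfl
  have hnormΦ : ∀ f : S →₀ ℝ, ‖Φ f‖ = ∑' p, |D f p| := by
    intro f
    rw [lp.norm_eq_tsum_rpow (by norm_num) (Φ f)]
    simp [hΦcoe, Real.norm_eq_abs]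
  -- summability of finsupps
  have hfsum : ∀ f : S →₀ ℝ, Summable (fun s : S => f s) := fun f =>
    summable_of_ne_finset_zero (s := f.support) (fun s hs => Finsupp.notMem_support_iff.mp hs)
  -- MAIN CLAIM
  have main : ∃ f : S →₀ ℝ, (∀ s, 0 ≤ f s) ∧ (∑' s, f s) = 1 ∧
      (∑' p : ↥F × S, |D f p|) ≤ ε ^ 2 := by
    by_contra hcon
    push_neg at hcon
    -- the convex set
    set C : Set (lp (fun _ : ↥F × S => ℝ) 1) :=
      {x | ∃ f : S →₀ ℝ, (∀ s, 0 ≤ f s) ∧ (∑' s, f s) = 1 ∧ Φ f = x} with hC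
    have hconv : Convex ℝ (closure C) := by
      refine Convex.closure ?_
      rintro x ⟨f, hf0, hf1, rfl⟩ y ⟨f', hf'0, hf'1, rfl⟩ a b ha hb hab
      refine ⟨a • f + b • f', fun s => ?_, ?_, ?_⟩
      · simp only [Finsupp.add_apply, Finsupp.smul_apply, smul_eq_mul]
        have := hf0 s; have := hf'0 s; nlinarith
      · have h1 : (fun s : S => (a • f + b • f') s) = fun s => a * f s + b * f' s := by
          funext s; simp [Finsupp.add_apply, Finsupp.smul_apply]
        rw [h1, Summable.tsum_add ((hfsum f).mul_left a) ((hfsum f').mul_left b),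
          tsum_mul_left, tsum_mul_left, hf1, hf'1]
        linarith
      · apply Subtype.ext
        have h2 : ⇑(a • Φ f + b • Φ f') = fun p => a * D f p + b * D f' p := by
          funext p
          rw [lp.coeFn_add, Pi.add_apply, lp.coeFn_smul, lp.coeFn_smul]
          simp [hΦcoe]
        rw [h2]
        funext p
        show D (a • f + b • f') p = a * D f p + b * D f' p
        simp only [hD, Finsupp.add_apply, Finsupp.smul_apply, smul_eq_mul]
        ring
    have h0notin : (0 : lp (fun _ : ↥F × S => ℝ) 1) ∉ closure C := by
      intro hmem0
      rw [Metric.mem_closure_iff] at hmem0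
      obtain ⟨b, hbC, hdist⟩ := hmem0 (ε ^ 2) (by positivity)
      obtain ⟨f, hf0, hf1, rfl⟩ := hbC
      have : ‖Φ f‖ ≤ ε ^ 2 := by
        rw [dist_comm, dist_zero_right] at hdist
        linarith
      rw [hnormΦ] at this
      exact absurd this (not_le.mpr (hcon f hf0 hf1))
    obtain ⟨φ, u, hsep, hu0⟩ := geometric_hahn_banach_closed_point hconv isClosed_closure h0notin
    rw [map_zero] at hu0
    set ψ := -φ with hψ
    set α := -u with hα
    have hαpos : 0 < α := by simp [hα]; linarith
    have hψC : ∀ x ∈ C, α ≤ ψ x := by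
      intro x hx
      have := hsep x (subset_closure hx)
      simp only [hψ, hα, ContinuousLinearMap.neg_apply]
      linarith
    set h : ↥F × S → ℝ := fun a => ψ (lp.single 1 a 1) with hh
    have hhb : ∀ a, |h a| ≤ ‖ψ‖ := by
      intro a
      have h1 := ψ.le_opNorm (lp.single 1 a 1)
      have h2 : ‖lp.single (E := fun _ : ↥F × S => ℝ) 1 a 1‖ = 1 := by
        have := lp.norm_single (E := fun _ : ↥F × S => ℝ) (p := 1)
          (by simp) a (1:ℝ)
        simpa using this
      rw [h2, mul_one] at h1
      simpa [hh, Real.norm_eq_abs] using h1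
    -- ψ applied to Φ f
    have hψΦ : ∀ f : S →₀ ℝ, ψ (Φ f) = ∑' p : ↥F × S, D f p * h p := by
      intro f
      have hsingles : Φ f = ∑ a ∈ Tc f, lp.single 1 a (D f a) := by
        apply Subtype.ext
        funext p
        rw [hΦcoe]
        have h3 : ⇑(∑ a ∈ Tc f, lp.single (E := fun _ : ↥F × S => ℝ) 1 a (D f a))
            = ∑ a ∈ Tc f, ⇑(lp.single (E := fun _ : ↥F × S => ℝ) 1 a (D f a)) :=
          lp.coeFn_sum _ _
        rw [h3]
        rw [Finset.sum_apply]
        by_cases hp : p ∈ Tc f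
        · rw [Finset.sum_eq_single p]
          · rw [lp.single_apply_self]
          · intro b hb hbp
            exact lp.single_apply_ne 1 b _ (Ne.symm hbp)
          · intro hcontra
            exact absurd hp hcontra
        · rw [hDsupp f p hp]
          symm
          apply Finset.sum_eq_zero
          intro b hb
          have hbp : p ≠ b := fun hq => hp (hq ▸ hb)
          exact lp.single_apply_ne 1 b _ hbp
      rw [tsum_eq_sum (s := Tc f) (fun p hp => by rw [hDsupp f p hp, zero_mul]), hsingles,
        map_sum]
      refine Finset.sum_congr rfl fun a ha => ?_
      have h4 : lp.single (E := fun _ : ↥F × S => ℝ) 1 a (D f a)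
          = D f a • lp.single (E := fun _ : ↥F × S => ℝ) 1 a 1 := by
        rw [← lp.single_smul]
        congr 1
        simp
      rw [h4, map_smul, smul_eq_mul, hh]
    -- key pointwise inequality from delta functions
    have hkey : ∀ t : S, α ≤ ∑ g : ↥F, (h (g, (g:G) • t) - h (g, t)) := by
      intro t
      set f : S →₀ ℝ := Finsupp.single t 1 with hf
      have hf0 : ∀ s, 0 ≤ f s := by
        intro s
        rw [hf, Finsupp.single_apply]
        split_ifs <;> norm_num
      have hf1 : (∑' s, f s) = 1 := by
        rw [tsum_eq_single t (fun s hs => by rw [hf, Finsupp.single_apply, if_neg (Ne.symm hs)])]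
        rw [hf, Finsupp.single_apply, if_pos rfl]
      have hC1 : Φ f ∈ C := ⟨f, hf0, hf1, rfl⟩
      have h5 := hψC _ hC1
      rw [hψΦ] at h5
      -- compute the tsum
      have h6 : ∑' p : ↥F × S, D f p * h p = ∑ g : ↥F, (h (g, (g:G) • t) - h (g, t)) := by
        have hsum : Summable (fun p : ↥F × S => D f p * h p) :=
          summable_of_ne_finset_zero (s := Tc f)
            (fun p hp => by rw [hDsupp f p hp, zero_mul])
        rw [Summable.tsum_prod' hsum (fun g => summable_of_ne_finset_zero
          (s := ((Tc f).filter (fun q => q.1 = g)).image Prod.snd)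
          (fun s hs => ?_))]
        · rw [tsum_fintype]
          refine Finset.sum_congr rfl fun g _ => ?_
          have hDval : ∀ s, D f (g, s) = f ((g:G)⁻¹ • s) - f s := fun s => rfl
          have hsub1 : Summable (fun s : S => f ((g:G)⁻¹ • s) * h (g, s)) := by
            refine summable_of_ne_finset_zero (s := {(g:G) • t}) (fun s hs => ?_)
            rw [Finset.mem_singleton] at hs
            have : (g:G)⁻¹ • s ≠ t := by
              intro hq
              exact hs (by rw [← hq, smul_inv_smul])
            rw [hf, Finsupp.single_apply, if_neg (Ne.symm this), zero_mul]
          have hsub2 : Summable (fun s : S => f s * h (g, s)) := by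
            refine summable_of_ne_finset_zero (s := {t}) (fun s hs => ?_)
            rw [Finset.mem_singleton] at hs
            rw [hf, Finsupp.single_apply, if_neg (Ne.symm hs), zero_mul]
          have h7 : (fun s : S => D f (g, s) * h (g, s))
              = fun s => f ((g:G)⁻¹ • s) * h (g, s) - f s * h (g, s) := by
            funext s
            rw [hDval]
            ring
          rw [h7, Summable.tsum_sub hsub1 hsub2,
            tsum_eq_single ((g:G) • t) ?_, tsum_eq_single t ?_]
          · rw [hf]
            simp [Finsupp.single_apply]
          · intro s hs
            rw [hf, Finsupp.single_apply, if_neg (Ne.symm hs), zero_mul]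
          · intro s hs
            have : (g:G)⁻¹ • s ≠ t := by
              intro hq
              exact hs (by rw [← hq, smul_inv_smul])
            rw [hf, Finsupp.single_apply, if_neg (Ne.symm this), zero_mul]
        · -- summability of each slice
          by_cases hz : D f (g, s) = 0
          · rw [hz, zero_mul]
          · exfalso
            apply hs
            have hmem2 : ((g, s) : ↥F × S) ∈ Tc f := by
              by_contra hq
              exact hz (hDsupp f _ hq)
            exact Finset.mem_image.mpr ⟨(g, s), Finset.mem_filter.mpr ⟨hmem2, rfl⟩, rfl⟩
      rw [h6] at h5
      exact h5
    -- choose N and K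
    obtain ⟨N, hN⟩ := exists_nat_gt ((F.card + 1) / α)
    have hNα : (F.card : ℝ) + 1 < N * α := by
      rw [div_lt_iff₀ hαpos] at hN
      linarith
    set Mb := ‖ψ‖ with hMb
    have hMb0 : 0 ≤ Mb := norm_nonneg _
    set K : ℤ := ⌈(N:ℝ) * Mb⌉ + 1 with hK
    have hfloor : ∀ a : ↥F × S, -K ≤ ⌊(N:ℝ) * h a⌋ ∧ ⌊(N:ℝ) * h a⌋ ≤ K := by
      intro a
      have hb := hhb a
      have habs : |(N:ℝ) * h a| ≤ (N:ℝ) * Mb := by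
        rw [abs_mul, abs_of_nonneg (by positivity : (0:ℝ) ≤ (N:ℝ))]
        exact mul_le_mul_of_nonneg_left hb (by positivity)
      rw [abs_le] at habs
      constructor
      · rw [Int.le_floor]
        push_cast [hK]
        have := Int.le_ceil ((N:ℝ) * Mb)
        have h8 : ((⌈(N:ℝ) * Mb⌉ : ℝ)) ≤ ⌈(N:ℝ) * Mb⌉ + 1 - 1 := by linarith
        nlinarith [Int.le_ceil ((N:ℝ) * Mb)]
      · have h9 : ((⌊(N:ℝ) * h a⌋ : ℝ)) ≤ (N:ℝ) * Mb := le_trans (Int.floor_le _) habs.2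
        have h10 : ((N:ℝ) * Mb) ≤ (K:ℝ) := by
          push_cast [hK]
          linarith [Int.le_ceil ((N:ℝ) * Mb)]
        exact_mod_cast le_trans h9 h10
    -- the sets
    set A : ↥F × ℤ → Set S := fun q => {s | (q.2 : ℝ) ≤ (N:ℝ) * h (q.1, s)} with hA
    set B : ↥F × ℤ → Set S := fun q => ((q.1 : G))⁻¹ • A q with hB
    -- apply the combinatorial lemma
    set ι := Option (Bool × ↥F × ℤ) with hι
    set uu : Finset ι := insert none
      ((((Finset.univ : Finset Bool) ×ˢ (Finset.univ : Finset ↥F) ×ˢ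
        Finset.Icc (1 - K) K)).image some) with huu
    set DD : ι → Set S := fun i => match i with
      | none => Set.univ
      | some (b, q) => if b then B q else A q
      with hDD
    set aa : ι → ℝ := fun i => match i with
      | none => -1
      | some (b, _) => if b then 1 else -1
      with haa
    have hnone : none ∉ (((Finset.univ : Finset Bool) ×ˢ (Finset.univ : Finset ↥F) ×ˢ
        Finset.Icc (1 - K) K)).image some := by
      simp
    have hsum_split : ∀ w : ι → ℝ, ∑ i ∈ uu, w i = w none
        + ∑ q ∈ (Finset.univ : Finset ↥F) ×ˢ Finset.Icc (1 - K) K, w (some (true, q))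
        + ∑ q ∈ (Finset.univ : Finset ↥F) ×ˢ Finset.Icc (1 - K) K, w (some (false, q)) := by
      intro w
      rw [huu, Finset.sum_insert hnone, Finset.sum_image (fun _ _ _ _ h => Option.some.inj h)]
      rw [Finset.sum_product (s := (Finset.univ : Finset Bool))]
      rw [Fintype.sum_bool]
      ring
    -- pointwise inequality
    have hptw : ∀ t : S, 0 ≤ ∑ i ∈ uu, aa i * (DD i).indicator (fun _ => (1:ℝ)) t := by
      intro t
      rw [hsum_split]
      have hBind : ∀ q ∈ (Finset.univ : Finset ↥F) ×ˢ Finset.Icc (1 - K) K,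
          aa (some (true, q)) * (DD (some (true, q))).indicator (fun _ => (1:ℝ)) t
          = if (q.2 : ℝ) ≤ (N:ℝ) * h (q.1, (q.1 : G) • t) then (1:ℝ) else 0 := by
        intro q _
        have : (DD (some (true, q))) = B q := by rw [hDD]; simp
        rw [this, haa]
        simp only [if_pos trivial]
        rw [one_mul]
        by_cases hmem3 : t ∈ B q
        · rw [Set.indicator_of_mem hmem3]
          simp only [hB, hA, Set.mem_inv_smul_set_iff, Set.mem_setOf_eq] at hmem3
          rw [if_pos hmem3]
        · rw [Set.indicator_of_notMem hmem3]
          simp only [hB, hA, Set.mem_inv_smul_set_iff, Set.mem_setOf_eq] at hmem3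
          rw [if_neg hmem3]
      have hAind : ∀ q ∈ (Finset.univ : Finset ↥F) ×ˢ Finset.Icc (1 - K) K,
          aa (some (false, q)) * (DD (some (false, q))).indicator (fun _ => (1:ℝ)) t
          = -(if (q.2 : ℝ) ≤ (N:ℝ) * h (q.1, t) then (1:ℝ) else 0) := by
        intro q _
        have hDDq : (DD (some (false, q))) = A q := by rw [hDD]; simp
        have haaq : aa (some (false, q)) = -1 := by rw [haa]; simp
        rw [hDDq, haaq]
        by_cases hmem3 : t ∈ A q
        · rw [Set.indicator_of_mem hmem3]
          simp only [hA, Set.mem_setOf_eq] at hmem3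
          rw [if_pos hmem3]
          ring
        · rw [Set.indicator_of_notMem hmem3]
          simp only [hA, Set.mem_setOf_eq] at hmem3
          rw [if_neg hmem3]
          ring
      rw [Finset.sum_congr rfl hBind, Finset.sum_congr rfl hAind]
      have hTB : ∑ q ∈ (Finset.univ : Finset ↥F) ×ˢ Finset.Icc (1 - K) K,
          (if (q.2 : ℝ) ≤ (N:ℝ) * h (q.1, (q.1 : G) • t) then (1:ℝ) else 0)
          = ∑ g : ↥F, ((⌊(N:ℝ) * h (g, (g:G) • t)⌋ : ℝ) + K) := by
        rw [Finset.sum_product]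
        exact Finset.sum_congr rfl fun g _ =>
          count_indicator (hfloor (g, (g:G) • t)).1 (hfloor (g, (g:G) • t)).2
      have hTA : ∑ q ∈ (Finset.univ : Finset ↥F) ×ˢ Finset.Icc (1 - K) K,
          (-(if (q.2 : ℝ) ≤ (N:ℝ) * h (q.1, t) then (1:ℝ) else 0))
          = -∑ g : ↥F, ((⌊(N:ℝ) * h (g, t)⌋ : ℝ) + K) := by
        rw [Finset.sum_neg_distrib, Finset.sum_product]
        congr 1
        exact Finset.sum_congr rfl fun g _ =>
          count_indicator (hfloor (g, t)).1 (hfloor (g, t)).2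
      rw [hTB, hTA]
      have hnone1 : aa none * (DD none).indicator (fun _ => (1:ℝ)) t = -1 := by
        have h1 : DD none = Set.univ := rfl
        have h2 : aa none = -1 := rfl
        rw [h1, h2, Set.indicator_univ]
        ring
      rw [hnone1]
      -- now the arithmetic
      set P := ∑ g : ↥F, h (g, (g:G) • t) with hP
      set Q := ∑ g : ↥F, h (g, t) with hQ
      have hcard : ((Finset.univ : Finset ↥F).card : ℝ) = F.card := by
        rw [Finset.card_univ, Fintype.card_coe]
      have hX : (N:ℝ) * P - F.card ≤ ∑ g : ↥F, ((⌊(N:ℝ) * h (g, (g:G) • t)⌋ : ℝ)) := by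
        have h3 : ∀ g ∈ (Finset.univ : Finset ↥F),
            (N:ℝ) * h (g, (g:G) • t) - 1 ≤ ((⌊(N:ℝ) * h (g, (g:G) • t)⌋ : ℝ)) :=
          fun g _ => le_of_lt (Int.sub_one_lt_floor _)
        have h4 := Finset.sum_le_sum h3
        rw [Finset.sum_sub_distrib, ← Finset.mul_sum, Finset.sum_const, nsmul_eq_mul,
          mul_one, hcard] at h4
        exact h4
      have hY : ∑ g : ↥F, ((⌊(N:ℝ) * h (g, t)⌋ : ℝ)) ≤ (N:ℝ) * Q := by
        have h3 : ∀ g ∈ (Finset.univ : Finset ↥F),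
            ((⌊(N:ℝ) * h (g, t)⌋ : ℝ)) ≤ (N:ℝ) * h (g, t) := fun g _ => Int.floor_le _
        have h4 := Finset.sum_le_sum h3
        rw [← Finset.mul_sum] at h4
        exact h4
      have hPQ : α ≤ P - Q := by
        have := hkey t
        rw [Finset.sum_sub_distrib] at this
        exact this
      have hNPQ : (N:ℝ) * α ≤ (N:ℝ) * (P - Q) :=
        mul_le_mul_of_nonneg_left hPQ (by positivity)
      have hsumK : ∑ g : ↥F, (((⌊(N:ℝ) * h (g, (g:G) • t)⌋ : ℝ)) + K)
          = (∑ g : ↥F, ((⌊(N:ℝ) * h (g, (g:G) • t)⌋ : ℝ))) + F.card * K := by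
        rw [Finset.sum_add_distrib, Finset.sum_const, nsmul_eq_mul, hcard]
      have hsumK2 : ∑ g : ↥F, (((⌊(N:ℝ) * h (g, t)⌋ : ℝ)) + K)
          = (∑ g : ↥F, ((⌊(N:ℝ) * h (g, t)⌋ : ℝ))) + F.card * K := by
        rw [Finset.sum_add_distrib, Finset.sum_const, nsmul_eq_mul, hcard]
      rw [hsumK, hsumK2]
      linarith
    have hfinal := m_nonneg_comb h0 hadd uu DD aa hptw
    have hBA : ∀ q : ↥F × ℤ, m (B q) = m (A q) := fun q => hinv _ _
    have hsimp : ∑ i ∈ uu, aa i * m (DD i) = -1 := by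
      rw [hsum_split (fun i => aa i * m (DD i))]
      have h1 : aa none * m (DD none) = -1 := by
        have e1 : DD none = Set.univ := rfl
        have e2 : aa none = -1 := rfl
        rw [e1, e2, hm1]
        ring
      have h2 : ∀ q ∈ (Finset.univ : Finset ↥F) ×ˢ Finset.Icc (1 - K) K,
          aa (some (true, q)) * m (DD (some (true, q))) = m (A q) := by
        intro q _
        have e1 : DD (some (true, q)) = B q := by rw [hDD]; simp
        have e2 : aa (some (true, q)) = 1 := by rw [haa]; simp
        rw [e1, e2, one_mul, hBA q]
      have h3 : ∀ q ∈ (Finset.univ : Finset ↥F) ×ˢ Finset.Icc (1 - K) K,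
          aa (some (false, q)) * m (DD (some (false, q))) = -(m (A q)) := by
        intro q _
        have e1 : DD (some (false, q)) = A q := by rw [hDD]; simp
        have e2 : aa (some (false, q)) = -1 := by rw [haa]; simp
        rw [e1, e2]
        ring
      rw [h1, Finset.sum_congr rfl h2, Finset.sum_congr rfl h3, Finset.sum_neg_distrib]
      ring
    rw [hsimp] at hfinal
    linarith
  -- construct ξ from f
  obtain ⟨f, hf0, hf1, hfsmall⟩ := main
  set ξ : S → ℝ := fun s => Real.sqrt (f s) with hξ
  have hξ2 : (fun s => ξ s ^ 2) = fun s => f s := by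
    funext s
    exact Real.sq_sqrt (hf0 s)
  have hsum2 : Summable (fun s => ξ s ^ 2) := by rw [hξ2]; exact hfsum f
  have htsum2 : ∑' s, ξ s ^ 2 = 1 := by
    rw [show ∑' s, ξ s ^ 2 = ∑' s, f s from tsum_congr fun s => by
      rw [hξ]; exact Real.sq_sqrt (hf0 s)]
    exact hf1
  refine ⟨ξ, hsum2, by rw [htsum2]; norm_num, ?_⟩
  intro g hg
  -- the per-g bound
  have hper : ∑' s, |f (g⁻¹ • s) - f s| ≤ ε ^ 2 := by
    have hslice : ∀ g' : ↥F, Summable (fun s => |D f (g', s)|) := by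
      intro g'
      refine summable_of_ne_finset_zero (s := (Tc f).image Prod.snd) (fun s hs => ?_)
      by_cases hz : D f (g', s) = 0
      · rw [hz, abs_zero]
      · exfalso
        apply hs
        have hmem2 : ((g', s) : ↥F × S) ∈ Tc f := by
          by_contra hq
          exact hz (hDsupp f _ hq)
        exact Finset.mem_image.mpr ⟨(g', s), hmem2, rfl⟩
    have hsplit : ∑' p : ↥F × S, |D f p| = ∑ g' : ↥F, ∑' s, |D f (g', s)| := by
      rw [Summable.tsum_prod' (hDsum f) hslice, tsum_fintype]
    have hone : ∑' s, |D f (⟨g, hg⟩, s)| ≤ ∑ g' : ↥F, ∑' s, |D f (g', s)| :=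
      Finset.single_le_sum (f := fun g' : ↥F => ∑' s, |D f (g', s)|)
        (fun g' _ => tsum_nonneg fun s => abs_nonneg _) (Finset.mem_univ (⟨g, hg⟩ : ↥F))
    have heq2 : (fun s => |f (g⁻¹ • s) - f s|) = fun s => |D f (⟨g, hg⟩, s)| := rfl
    rw [heq2]
    calc ∑' s, |D f (⟨g, hg⟩, s)| ≤ ∑ g' : ↥F, ∑' s, |D f (g', s)| := hone
      _ = ∑' p : ↥F × S, |D f p| := hsplit.symm
      _ ≤ ε ^ 2 := hfsmall
  have hsummR : Summable (fun s => |f (g⁻¹ • s) - f s|) := by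
    refine summable_of_ne_finset_zero (s := f.support.image ((g:G) • ·) ∪ f.support)
      (fun s hs => ?_)
    rw [Finset.mem_union, not_or] at hs
    have h1 : f s = 0 := by
      by_contra hq
      exact hs.2 (Finsupp.mem_support_iff.mpr hq)
    have h2 : f (g⁻¹ • s) = 0 := by
      by_contra hq
      exact hs.1 (Finset.mem_image.mpr ⟨g⁻¹ • s, Finsupp.mem_support_iff.mpr hq, by simp⟩)
    rw [h1, h2, sub_zero, abs_zero]
  have hptw2 : ∀ s, (ξ (g⁻¹ • s) - ξ s) ^ 2 ≤ |f (g⁻¹ • s) - f s| :=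
    fun s => sqrt_sub_sq_le_abs (hf0 _) (hf0 _)
  have hsummL : Summable (fun s => (ξ (g⁻¹ • s) - ξ s) ^ 2) :=
    Summable.of_nonneg_of_le (fun s => sq_nonneg _) hptw2 hsummR
  rw [htsum2, mul_one]
  exact le_trans (Summable.tsum_le_tsum hptw2 hsummL hsummR) hper

end Fwd


section Conv
variable {G : Type*} [Group G] {S : Type*} [MulAction G S]


lemma key_bound {g : G} {ξ : S → ℝ} {ε : ℝ} (hs : Summable (fun s => ξ s ^ 2))
    (hne : (∑' s, ξ s ^ 2) ≠ 0) (hε : 0 ≤ ε)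
    (hinv : ∑' s, (ξ ((g⁻¹)⁻¹ • s) - ξ s) ^ 2 ≤ ε ^ 2 * ∑' s, ξ s ^ 2) (A : Set S) :
    ‖(∑' s, (g • A).indicator (fun s => ξ s ^ 2) s) / (∑' s, ξ s ^ 2)
      - (∑' s, A.indicator (fun s => ξ s ^ 2) s) / (∑' s, ξ s ^ 2)‖ ≤ 2 * ε := by
  set T : ℝ := ∑' s, ξ s ^ 2 with hTdef
  have hT0 : 0 < T := lt_of_le_of_ne (tsum_nonneg fun s => sq_nonneg _) (Ne.symm hne)
  set η : S → ℝ := fun s => ξ (g • s) with hηdef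
  have hη2 : Summable (fun s => η s ^ 2) := by
    have : (fun s => η s ^ 2) = (fun s => ξ s ^ 2) ∘ ((MulAction.toPerm g : Equiv.Perm S)) := rfl
    rw [this, Equiv.summable_iff]
    exact hs
  have hηT : ∑' s, η s ^ 2 = T := by
    have := ((MulAction.toPerm g : Equiv.Perm S)).tsum_eq (fun s => ξ s ^ 2)
    exact this
  have hdiff2 : ∑' s, (η s - ξ s) ^ 2 ≤ ε ^ 2 * T := by
    have : (fun s => (η s - ξ s) ^ 2) = fun s => (ξ ((g⁻¹)⁻¹ • s) - ξ s) ^ 2 := by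
      funext s; simp [hηdef]
    rw [this]
    exact hinv
  have hsub : Summable (fun s => (η s - ξ s) ^ 2) := by
    refine Summable.of_nonneg_of_le (fun s => sq_nonneg _) (fun s => ?_)
      ((hη2.add hs).mul_left 2)
    nlinarith [sq_nonneg (η s + ξ s)]
  have hadd : Summable (fun s => (η s + ξ s) ^ 2) := by
    refine Summable.of_nonneg_of_le (fun s => sq_nonneg _) (fun s => ?_)
      ((hη2.add hs).mul_left 2)
    nlinarith [sq_nonneg (η s - ξ s)]
  have haddT : ∑' s, (η s + ξ s) ^ 2 ≤ 4 * T := by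
    have h1 : ∑' s, (η s + ξ s) ^ 2 ≤ ∑' s, (2 * η s ^ 2 + 2 * ξ s ^ 2) := by
      refine Summable.tsum_le_tsum (fun s => by nlinarith [sq_nonneg (η s - ξ s)]) hadd
        ((hη2.mul_left 2).add (hs.mul_left 2))
    have h2 : ∑' s, (2 * η s ^ 2 + 2 * ξ s ^ 2) = 4 * T := by
      rw [Summable.tsum_add (hη2.mul_left 2) (hs.mul_left 2), tsum_mul_left, tsum_mul_left, hηT]
      ring
    linarith
  -- numerator: reindex
  have hnum : ∑' s, (g • A).indicator (fun s => ξ s ^ 2) s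
      = ∑' s, A.indicator (fun s => η s ^ 2) s := by
    rw [← ((MulAction.toPerm g : Equiv.Perm S)).tsum_eq ((g • A).indicator (fun s => ξ s ^ 2))]
    refine tsum_congr fun s => ?_
    simp only [MulAction.toPerm_apply]
    by_cases hsA : s ∈ A
    · rw [Set.indicator_of_mem (by exact Set.smul_mem_smul_set hsA),
        Set.indicator_of_mem hsA]
    · rw [Set.indicator_of_notMem (fun hc => hsA ((Set.smul_mem_smul_set_iff).mp hc)),
        Set.indicator_of_notMem hsA]
  have hab : Summable (fun s => |(η s - ξ s) * (η s + ξ s)|) := summable_abs_mul hsub hadd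
  have hptw : ∀ s, |A.indicator (fun s => η s ^ 2) s - A.indicator (fun s => ξ s ^ 2) s|
      ≤ |(η s - ξ s) * (η s + ξ s)| := by
    intro s
    by_cases hsA : s ∈ A
    · rw [Set.indicator_of_mem hsA, Set.indicator_of_mem hsA]
      exact le_of_eq (by congr 1; ring)
    · rw [Set.indicator_of_notMem hsA, Set.indicator_of_notMem hsA]
      simp [abs_nonneg]
      positivity
  have husum : Summable (fun s => A.indicator (fun s => η s ^ 2) s
      - A.indicator (fun s => ξ s ^ 2) s) := (hη2.indicator A).sub (hs.indicator A)
  have habs : ‖∑' s, (A.indicator (fun s => η s ^ 2) s - A.indicator (fun s => ξ s ^ 2) s)‖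
      ≤ ∑' s, |(η s - ξ s) * (η s + ξ s)| := by
    have h6 : Summable (fun s => ‖A.indicator (fun s => η s ^ 2) s
        - A.indicator (fun s => ξ s ^ 2) s‖) := by
      refine Summable.of_nonneg_of_le (fun s => norm_nonneg _) (fun s => ?_) hab
      simpa [Real.norm_eq_abs] using hptw s
    refine le_trans (norm_tsum_le_tsum_norm h6) ?_
    refine Summable.tsum_le_tsum (fun s => by simpa [Real.norm_eq_abs] using hptw s) h6 hab
  have hcs : ∑' s, |(η s - ξ s) * (η s + ξ s)| ≤ 2 * ε * T := by
    refine le_trans (tsum_abs_mul_le hsub hadd) ?_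
    have h7 : Real.sqrt (∑' s, (η s - ξ s) ^ 2) ≤ ε * Real.sqrt T := by
      refine le_trans (Real.sqrt_le_sqrt hdiff2) ?_
      rw [Real.sqrt_mul (sq_nonneg ε), Real.sqrt_sq hε]
    have h8 : Real.sqrt (∑' s, (η s + ξ s) ^ 2) ≤ 2 * Real.sqrt T := by
      refine le_trans (Real.sqrt_le_sqrt haddT) ?_
      rw [show (4:ℝ) * T = 2 ^ 2 * T by ring, Real.sqrt_mul (by norm_num),
        Real.sqrt_sq (by norm_num)]
    have h9 : Real.sqrt (∑' s, (η s - ξ s) ^ 2) ≥ 0 := Real.sqrt_nonneg _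
    have h10 : Real.sqrt (∑' s, (η s + ξ s) ^ 2) ≥ 0 := Real.sqrt_nonneg _
    calc Real.sqrt (∑' s, (η s - ξ s) ^ 2) * Real.sqrt (∑' s, (η s + ξ s) ^ 2)
        ≤ (ε * Real.sqrt T) * (2 * Real.sqrt T) := by
          refine mul_le_mul h7 h8 h10 (by positivity)
      _ = 2 * ε * (Real.sqrt T * Real.sqrt T) := by ring
      _ = 2 * ε * T := by rw [Real.mul_self_sqrt hT0.le]
  rw [hnum, div_sub_div_same, ← Summable.tsum_sub (hη2.indicator A) (hs.indicator A)]
  rw [norm_div, Real.norm_eq_abs T, abs_of_pos hT0, div_le_iff₀ hT0]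
  calc ‖∑' s, (A.indicator (fun s => η s ^ 2) s - A.indicator (fun s => ξ s ^ 2) s)‖
      ≤ ∑' s, |(η s - ξ s) * (η s + ξ s)| := habs
    _ ≤ 2 * ε * T := hcs

lemma mean_of_vectors
    (H : ∀ (F : Finset G) (ε : ℝ), 0 < ε →
        ∃ ξ : S → ℝ, Summable (fun s => ξ s ^ 2) ∧ (∑' s, ξ s ^ 2) ≠ 0 ∧
          ∀ g ∈ F, ∑' s, (ξ (g⁻¹ • s) - ξ s) ^ 2 ≤ ε ^ 2 * ∑' s, ξ s ^ 2) :
    ∃ m : Set S → ℝ, m Set.univ = 1 ∧ (∀ A, 0 ≤ m A) ∧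
        (∀ A B, Disjoint A B → m (A ∪ B) = m A + m B) ∧
        (∀ (g : G) (A : Set S), m (g • A) = m A) := by
  classical
  -- choose almost invariant vectors
  have H' : ∀ p : Finset G × ℕ, ∃ ξ : S → ℝ, Summable (fun s => ξ s ^ 2) ∧
      (∑' s, ξ s ^ 2) ≠ 0 ∧
      ∀ g ∈ p.1, ∑' s, (ξ (g⁻¹ • s) - ξ s) ^ 2 ≤ (1 / (p.2 + 1)) ^ 2 * ∑' s, ξ s ^ 2 :=
    fun p => H p.1 (1 / (p.2 + 1)) (by positivity)
  choose ξ hsum hne hinv using H'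
  set T : Finset G × ℕ → ℝ := fun p => ∑' s, ξ p s ^ 2 with hT
  have hTpos : ∀ p, 0 < T p := fun p =>
    lt_of_le_of_ne (tsum_nonneg fun s => sq_nonneg _) (Ne.symm (hne p))
  set ν : Finset G × ℕ → Set S → ℝ :=
    fun p A => (∑' s, A.indicator (fun s => ξ p s ^ 2) s) / T p with hν
  have hν01 : ∀ p A, ν p A ∈ Set.Icc (0:ℝ) 1 := by
    intro p A
    constructor
    · exact div_nonneg (tsum_nonneg fun s => Set.indicator_nonneg (fun s _ => sq_nonneg _) s)
        (hTpos p).le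
    · rw [div_le_one (hTpos p)]
      exact Summable.tsum_le_tsum (fun s => Set.indicator_le_self' (fun x _ => sq_nonneg _) s)
        ((hsum p).indicator A) (hsum p)
  -- ultrafilter
  obtain ⟨U, hU⟩ := Ultrafilter.exists_le (atTop : Filter (Finset G × ℕ))
  set v : Set S → (Finset G × ℕ) → Set.Icc (0:ℝ) 1 :=
    fun A p => ⟨ν p A, hν01 p A⟩ with hv
  have hten : ∀ A : Set S, Tendsto (fun p => ν p A) ↑U
      (nhds (((U.map (v A)).lim : Set.Icc (0:ℝ) 1).1)) := by
    intro A
    have h1 : Tendsto (v A) ↑U (nhds ((U.map (v A)).lim)) := by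
      have := Ultrafilter.le_nhds_lim (U.map (v A))
      exact this
    exact (continuous_subtype_val.tendsto _).comp h1
  refine ⟨fun A => ((U.map (v A)).lim : Set.Icc (0:ℝ) 1).1, ?_, ?_, ?_, ?_⟩
  · -- m univ = 1
    have hconst : Tendsto (fun p => ν p Set.univ) ↑U (nhds 1) := by
      have h : (fun p => ν p Set.univ) = fun _ => (1:ℝ) := by
        funext p
        simp only [hν, Set.indicator_univ]
        exact div_self (hne p)
      rw [h]
      exact tendsto_const_nhds
    exact tendsto_nhds_unique (hten Set.univ) hconst
  · -- nonneg
    exact fun A => (((U.map (v A)).lim : Set.Icc (0:ℝ) 1)).2.1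
  · -- additivity
    intro A B hAB
    show ((U.map (v (A ∪ B))).lim : Set.Icc (0:ℝ) 1).1
      = ((U.map (v A)).lim : Set.Icc (0:ℝ) 1).1 + ((U.map (v B)).lim : Set.Icc (0:ℝ) 1).1
    refine tendsto_nhds_unique (hten (A ∪ B)) ?_
    have heq : (fun p => ν p (A ∪ B)) = fun p => ν p A + ν p B := by
      funext p
      simp only [hν]
      rw [Set.indicator_union_of_disjoint hAB, Summable.tsum_add ((hsum p).indicator A)
        ((hsum p).indicator B), add_div]
    rw [heq]
    exact ((hten A).add (hten B))
  · -- invariance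
    intro g A
    have hsmall : Tendsto (fun p => ν p (g • A) - ν p A) ↑U (nhds 0) := by
      refine squeeze_zero_norm' (a := fun p : Finset G × ℕ => 2 / ((p.2 : ℝ) + 1)) ?_ ?_
      · -- eventually bound by 2/(p.2+1)
        refine Filter.Eventually.filter_mono hU ?_
        filter_upwards [Filter.eventually_ge_atTop (({g⁻¹} : Finset G), 0)] with p hp
        have hg : g⁻¹ ∈ p.1 := Finset.singleton_subset_iff.mp hp.1
        have hb := key_bound (g := g) (hsum p) (hne p) (by positivity)
          (hinv p g⁻¹ hg) A
        calc ‖ν p (g • A) - ν p A‖ ≤ 2 * (1 / ((p.2 : ℝ) + 1)) := hb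
          _ = 2 / ((p.2 : ℝ) + 1) := by ring
      · have h2 : Tendsto (fun p : Finset G × ℕ => p.2) atTop atTop := by
          rw [← Filter.prod_atTop_atTop_eq]
          exact tendsto_snd
        have h3 : Tendsto (fun n : ℕ => 2 / ((n:ℝ) + 1)) atTop (nhds 0) := by
          have := tendsto_one_div_add_atTop_nhds_zero_nat (𝕜 := ℝ)
          have h4 := this.const_mul (2:ℝ)
          simpa [div_eq_mul_inv, mul_comm] using h4
        exact (h3.comp h2).mono_left hU
    have := ((hten (g • A)).sub (hten A))
    have h5 := tendsto_nhds_unique this hsmall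
    linarith

end Conv


/-- a countable group action on a countable set admits an invariant mean
iff it admits almost-invariant `ℓ²`-vectors. -/
theorem invariant_mean_iff_almost_invariant_vectors
    (G : Type*) [Group G] [Countable G] (S : Type*) [Countable S] [MulAction G S] :
    (∃ m : Set S → ℝ, m Set.univ = 1 ∧ (∀ A, 0 ≤ m A) ∧
        (∀ A B, Disjoint A B → m (A ∪ B) = m A + m B) ∧
        (∀ (g : G) (A : Set S), m (g • A) = m A)) ↔
      (∀ (F : Finset G) (ε : ℝ), 0 < ε →
        ∃ ξ : S → ℝ, Summable (fun s => ξ s ^ 2) ∧ (∑' s, ξ s ^ 2) ≠ 0 ∧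
          ∀ g ∈ F, ∑' s, (ξ (g⁻¹ • s) - ξ s) ^ 2 ≤ ε ^ 2 * ∑' s, ξ s ^ 2) := by
  constructor
  · rintro ⟨m, hm1, h0, hadd, hinv⟩ F ε hε
    exact vectors_of_mean m hm1 h0 hadd hinv F ε hε
  · exact mean_of_vectors
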